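/- Let U ⊆ ℝ² be open with coordinates (u,v), let φ, k₁, k₂, Ω, Ω₁, Ω₂, W : U → ℝ be smooth with φ > 0, satisfying the Ribaucour sphere-congruence system (R1)–(R6), and suppose there are constants c ≠ 0, c₁, c₂, c₃ such that the first integral Ω₁² + Ω₂² + W² − 2cΩW + c₂W + c₃Ω + c₁ = 0 holds on U. Assume moreover that Ω₁ and Ω₂ vanish nowhere on U. Then the Hessian of Ω with respect to the metric φ²(du²+dv²) satisfies ∇²Ω = (cW − c₃/2)I + (cΩ − W − c₂/2)II; explicitly, the following three identities hold on U: (i) Ω_uv/φ − Ω_uφ_v/φ² − Ω_vφ_u/φ² = 0; (ii) Ω_uu/φ − Ω_uφ_u/φ² + Ω_vφ_v/φ² = φ(cW − c₃/2) + φk₁(cΩ − W − c₂/2); (iii) Ω_vv/φ − Ω_vφ_v/φ² + Ω_uφ_u/φ² = φ(cW − c₃/2) + φk₂(cΩ − W − c₂/2). -/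

import Mathlib

/-- Partial derivative in the `u`-direction of a function on `ℝ²`. -/
noncomputable def pu (f : ℝ × ℝ → ℝ) (p : ℝ × ℝ) : ℝ := fderiv ℝ f p (1, 0)

/-- Partial derivative in the `v`-direction of a function on `ℝ²`. -/
noncomputable def pv (f : ℝ × ℝ → ℝ) (p : ℝ × ℝ) : ℝ := fderiv ℝ f p (0, 1)

lemma fd_mul {f g : ℝ × ℝ → ℝ} {p : ℝ × ℝ} (w : ℝ × ℝ)
    (hf : DifferentiableAt ℝ f p) (hg : DifferentiableAt ℝ g p) :
    fderiv ℝ (fun x => f x * g x) p w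
      = f p * fderiv ℝ g p w + g p * fderiv ℝ f p w := by
  rw [fderiv_fun_mul hf hg]; simp [smul_eq_mul]

/-- for a solution `Ω, Ω₁, Ω₂, W` of the Ribaucour sphere-congruence
system (R1)-(R6) over a minimal surface with conformal factor `φ` and principal
curvatures `k₁, k₂`, admitting the first integral
`Ω₁² + Ω₂² + W² - 2cΩW + c₂W + c₃Ω + c₁ = 0` (`c ≠ 0`) and with `Ω₁, Ω₂` nowhere zero,
the Hessian of `Ω` with respect to `φ²(du²+dv²)` satisfies
`∇²Ω = (cW - c₃/2)I + (cΩ - W - c₂/2)II`, explicitly the three identities (i)-(iii). -/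
theorem hessian_of_omega_first_integral
    (U : Set (ℝ × ℝ)) (hU : IsOpen U)
    (φ k₁ k₂ Om Om₁ Om₂ W : ℝ × ℝ → ℝ)
    (hφ : ContDiffOn ℝ (⊤ : ℕ∞) φ U) (hk₁ : ContDiffOn ℝ (⊤ : ℕ∞) k₁ U)
    (hk₂ : ContDiffOn ℝ (⊤ : ℕ∞) k₂ U) (hOm : ContDiffOn ℝ (⊤ : ℕ∞) Om U)
    (hOm₁ : ContDiffOn ℝ (⊤ : ℕ∞) Om₁ U) (hOm₂ : ContDiffOn ℝ (⊤ : ℕ∞) Om₂ U)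
    (hW : ContDiffOn ℝ (⊤ : ℕ∞) W U)
    (hφpos : ∀ p ∈ U, 0 < φ p)
    (hR1 : ∀ p ∈ U, pv Om₁ p = Om₂ p * (pu φ p / φ p))
    (hR2 : ∀ p ∈ U, pu Om₂ p = Om₁ p * (pv φ p / φ p))
    (hR3 : ∀ p ∈ U, pu Om p = φ p * Om₁ p)
    (hR4 : ∀ p ∈ U, pv Om p = φ p * Om₂ p)
    (hR5 : ∀ p ∈ U, pu W p = Om₁ p * k₁ p * φ p)
    (hR6 : ∀ p ∈ U, pv W p = Om₂ p * k₂ p * φ p)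
    (c c₁ c₂ c₃ : ℝ) (hc : c ≠ 0)
    (hfirst : ∀ p ∈ U, Om₁ p ^ 2 + Om₂ p ^ 2 + W p ^ 2 - 2 * c * Om p * W p
      + c₂ * W p + c₃ * Om p + c₁ = 0)
    (hOm₁ne : ∀ p ∈ U, Om₁ p ≠ 0) (hOm₂ne : ∀ p ∈ U, Om₂ p ≠ 0) :
    ∀ p ∈ U,
      pv (pu Om) p / φ p - pu Om p * pv φ p / φ p ^ 2
        - pv Om p * pu φ p / φ p ^ 2 = 0 ∧
      pu (pu Om) p / φ p - pu Om p * pu φ p / φ p ^ 2 + pv Om p * pv φ p / φ p ^ 2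
        = φ p * (c * W p - c₃ / 2) + φ p * k₁ p * (c * Om p - W p - c₂ / 2) ∧
      pv (pv Om) p / φ p - pv Om p * pv φ p / φ p ^ 2 + pu Om p * pu φ p / φ p ^ 2
        = φ p * (c * W p - c₃ / 2) + φ p * k₂ p * (c * Om p - W p - c₂ / 2) := by
  intro p hp
  have hpU : U ∈ nhds p := hU.mem_nhds hp
  have hφne : φ p ≠ 0 := (hφpos p hp).ne'
  have dφ : DifferentiableAt ℝ φ p :=
    (hφ.contDiffAt hpU).differentiableAt (by simp)
  have dOm : DifferentiableAt ℝ Om p :=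
    (hOm.contDiffAt hpU).differentiableAt (by simp)
  have dOm₁ : DifferentiableAt ℝ Om₁ p :=
    (hOm₁.contDiffAt hpU).differentiableAt (by simp)
  have dOm₂ : DifferentiableAt ℝ Om₂ p :=
    (hOm₂.contDiffAt hpU).differentiableAt (by simp)
  have dW : DifferentiableAt ℝ W p :=
    (hW.contDiffAt hpU).differentiableAt (by simp)
  -- second derivatives of Om via R3, R4
  have hOu : pu Om =ᶠ[nhds p] fun x => φ x * Om₁ x :=
    Filter.eventuallyEq_of_mem hpU fun x hx => hR3 x hx
  have hOv : pv Om =ᶠ[nhds p] fun x => φ x * Om₂ x :=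
    Filter.eventuallyEq_of_mem hpU fun x hx => hR4 x hx
  have e_uv : pv (pu Om) p = φ p * pv Om₁ p + Om₁ p * pv φ p := by
    show fderiv ℝ (pu Om) p (0,1) = _
    rw [hOu.fderiv_eq, fd_mul (0,1) dφ dOm₁]; rfl
  have e_uu : pu (pu Om) p = φ p * pu Om₁ p + Om₁ p * pu φ p := by
    show fderiv ℝ (pu Om) p (1,0) = _
    rw [hOu.fderiv_eq, fd_mul (1,0) dφ dOm₁]; rfl
  have e_vv : pv (pv Om) p = φ p * pv Om₂ p + Om₂ p * pv φ p := by
    show fderiv ℝ (pv Om) p (0,1) = _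
    rw [hOv.fderiv_eq, fd_mul (0,1) dφ dOm₂]; rfl
  -- derivative of the first integral
  have HG := ((((((dOm₁.hasFDerivAt.mul dOm₁.hasFDerivAt).add
      (dOm₂.hasFDerivAt.mul dOm₂.hasFDerivAt)).add
      (dW.hasFDerivAt.mul dW.hasFDerivAt)).add
      ((dOm.hasFDerivAt.mul dW.hasFDerivAt).const_mul (-(2*c)))).add
      (dW.hasFDerivAt.const_mul c₂)).add
      (dOm.hasFDerivAt.const_mul c₃)).add_const c₁
  have hGev : (fun x => Om₁ x * Om₁ x + Om₂ x * Om₂ x + W x * W x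
      + -(2*c) * (Om x * W x) + c₂ * W x + c₃ * Om x + c₁)
      =ᶠ[nhds p] fun _ => (0:ℝ) :=
    Filter.eventuallyEq_of_mem hpU fun x hx => by
      have h := hfirst x hx; linear_combination h
  have HG0 : HasFDerivAt _ (0 : (ℝ×ℝ) →L[ℝ] ℝ) p :=
    (hasFDerivAt_const (0:ℝ) p).congr_of_eventuallyEq hGev
  have h5 := HG.unique HG0
  have EU := congrArg (fun L : (ℝ×ℝ) →L[ℝ] ℝ => L (1,0)) h5
  have EV := congrArg (fun L : (ℝ×ℝ) →L[ℝ] ℝ => L (0,1)) h5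
  simp only [ContinuousLinearMap.add_apply, ContinuousLinearMap.smul_apply,
    smul_eq_mul, ContinuousLinearMap.zero_apply] at EU EV
  rw [show fderiv ℝ Om₁ p (1,0) = pu Om₁ p from rfl,
    show fderiv ℝ Om₂ p (1,0) = pu Om₂ p from rfl,
    show fderiv ℝ W p (1,0) = pu W p from rfl,
    show fderiv ℝ Om p (1,0) = pu Om p from rfl,
    hR5 p hp, hR3 p hp] at EU
  rw [show fderiv ℝ Om₁ p (0,1) = pv Om₁ p from rfl,
    show fderiv ℝ Om₂ p (0,1) = pv Om₂ p from rfl,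
    show fderiv ℝ W p (0,1) = pv W p from rfl,
    show fderiv ℝ Om p (0,1) = pv Om p from rfl,
    hR6 p hp, hR4 p hp] at EV
  have hR2' : φ p * pu Om₂ p = Om₁ p * pv φ p := by
    rw [hR2 p hp]; field_simp
  have hR1' : φ p * pv Om₁ p = Om₂ p * pu φ p := by
    rw [hR1 p hp]; field_simp
  have keyU : (2 * Om₁ p) * (φ p * pu Om₁ p + Om₂ p * pv φ p
      - φ p^2 * (c * W p - c₃/2) - k₁ p * φ p^2 * (c * Om p - W p - c₂/2)) = 0 := by
    linear_combination (φ p) * EU - (2 * Om₂ p) * hR2'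
  have keyV : (2 * Om₂ p) * (φ p * pv Om₂ p + Om₁ p * pu φ p
      - φ p^2 * (c * W p - c₃/2) - k₂ p * φ p^2 * (c * Om p - W p - c₂/2)) = 0 := by
    linear_combination (φ p) * EV - (2 * Om₁ p) * hR1'
  have hXu : φ p * pu Om₁ p = -(Om₂ p * pv φ p)
      + φ p^2 * (c * W p - c₃/2) + k₁ p * φ p^2 * (c * Om p - W p - c₂/2) := by
    rcases mul_eq_zero.mp keyU with h | h
    · exact absurd h (by simpa using hOm₁ne p hp)
    · linarith
  have hXv : φ p * pv Om₂ p = -(Om₁ p * pu φ p)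
      + φ p^2 * (c * W p - c₃/2) + k₂ p * φ p^2 * (c * Om p - W p - c₂/2) := by
    rcases mul_eq_zero.mp keyV with h | h
    · exact absurd h (by simpa using hOm₂ne p hp)
    · linarith
  refine ⟨?_, ?_, ?_⟩
  · rw [e_uv, hR3 p hp, hR4 p hp, hR1 p hp]
    field_simp
    ring
  · rw [e_uu, hR3 p hp, hR4 p hp]
    field_simp
    linear_combination 2 * hXu
  · rw [e_vv, hR3 p hp, hR4 p hp]
    field_simp
    linear_combination 2 * hXv
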